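/- Let n ≥ k ≥ 1, let L be a symmetric real n×n matrix and B a real n×k matrix, and define F(X) = ⟨X, L X⟩ − ⟨X, B⟩ for real n×k matrices X. Suppose X lies in the Stiefel manifold St(n,k) and satisfies F(X) ≤ F(X Q) for every orthogonal k×k matrix Q (in particular this holds if X is a global minimizer of F over St(n,k), since St(n,k) is invariant under right-multiplication by orthogonal matrices). Then the k×k matrix Xᵀ B is symmetric and positive semidefinite. -/

import Mathlib

open Matrix

set_option maxHeartbeats 1000000

private lemma trace_stdBasisMatrix_mul {k : ℕ} (a b : Fin k) (v : ℝ)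
    (M : Matrix (Fin k) (Fin k) ℝ) :
    (Matrix.single a b v * M).trace = v * M b a := by
  rw [Matrix.trace, Finset.sum_eq_single a]
  · simp [Matrix.diag]
  · intro m _ hm
    simp [Matrix.diag, Matrix.single_mul_apply_of_ne (h := hm)]
  · simp

private lemma rot_orth {k : ℕ} (i j : Fin k) (hij : i ≠ j) (c s : ℝ)
    (h : c ^ 2 + s ^ 2 = 1) :
    (1 + Matrix.single i i (c-1) + Matrix.single j j (c-1)
       + Matrix.single j i s - Matrix.single i j s : Matrix (Fin k) (Fin k) ℝ)ᵀ *
    (1 + Matrix.single i i (c-1) + Matrix.single j j (c-1)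
       + Matrix.single j i s - Matrix.single i j s) = 1 := by
  have ht : ∀ (a b : Fin k) (v : ℝ), (Matrix.single a b v)ᵀ = Matrix.single b a v := by
    intro a b v; ext x y; simp [Matrix.single, and_comm]
  simp only [transpose_add, transpose_sub, transpose_one, ht]
  simp only [mul_add, add_mul, mul_sub, sub_mul, one_mul, mul_one,
    Matrix.single_mul_single_same, Matrix.single_mul_single_of_ne, hij, hij.symm, ne_eq,
    not_false_iff]
  ext a b
  simp only [Matrix.add_apply, Matrix.sub_apply, Matrix.one_apply, Matrix.zero_apply,
    Matrix.single_apply_same, Matrix.single, of_apply]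
  split_ifs <;> simp_all <;> nlinarith [h]

/-- If `X ∈ St(n,k)` satisfies `F(X) ≤ F(XQ)` for all orthogonal `Q`, where
`F(X) = ⟨X, LX⟩ − ⟨X, B⟩`, then `Xᵀ B` is symmetric positive semidefinite. -/
theorem stmt_0 {n k : ℕ} (hk : 1 ≤ k) (hnk : k ≤ n)
    (L : Matrix (Fin n) (Fin n) ℝ) (hL : L.IsSymm)
    (B X : Matrix (Fin n) (Fin k) ℝ)
    (hX : Xᵀ * X = 1)
    (hmin : ∀ Q : Matrix (Fin k) (Fin k) ℝ, Qᵀ * Q = 1 →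
      (Xᵀ * (L * X)).trace - (Xᵀ * B).trace ≤
        ((X * Q)ᵀ * (L * (X * Q))).trace - ((X * Q)ᵀ * B).trace) :
    (Xᵀ * B).IsSymm ∧ (Xᵀ * B).PosSemidef := by
  set A := Xᵀ * B with hA
  -- key consequence: trace (Qᵀ A) ≤ trace A for all orthogonal Q
  have key : ∀ Q : Matrix (Fin k) (Fin k) ℝ, Qᵀ * Q = 1 → (Qᵀ * A).trace ≤ A.trace := by
    intro Q hQ
    have h := hmin Q hQ
    have hQQ : Q * Qᵀ = 1 := mul_eq_one_comm.mp hQ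
    have e1 : ((X * Q)ᵀ * (L * (X * Q))).trace = (Xᵀ * (L * X)).trace := by
      have : (X * Q)ᵀ * (L * (X * Q)) = Qᵀ * (Xᵀ * (L * X)) * Q := by
        simp [transpose_mul, Matrix.mul_assoc]
      rw [this, Matrix.trace_mul_cycle, ← Matrix.mul_assoc, hQQ, Matrix.one_mul]
    have e2 : ((X * Q)ᵀ * B).trace = (Qᵀ * A).trace := by
      rw [hA, transpose_mul, Matrix.mul_assoc]
    rw [e1, e2] at h
    linarith
  -- symmetry
  have hsymm : A.IsSymm := by
    rw [Matrix.IsSymm]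
    ext i j
    rw [Matrix.transpose_apply]
    rcases eq_or_ne i j with rfl | hij
    · rfl
    -- plane rotation argument
    have main : ∀ (c s : ℝ), c ^ 2 + s ^ 2 = 1 →
        (c - 1) * (A i i + A j j) + s * (A j i - A i j) ≤ 0 := by
      intro c s hcs
      have hQ := rot_orth i j hij c s hcs
      have h := key _ hQ
      have ht : ∀ (a b : Fin k) (v : ℝ), (Matrix.single a b v)ᵀ = Matrix.single b a v := by
        intro a b v; ext x y; simp [Matrix.single, and_comm]
      rw [show (1 + Matrix.single i i (c-1) + Matrix.single j j (c-1)
           + Matrix.single j i s - Matrix.single i j s : Matrix (Fin k) (Fin k) ℝ)ᵀ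
           = 1 + Matrix.single i i (c-1) + Matrix.single j j (c-1)
           + Matrix.single i j s - Matrix.single j i s by
        simp only [transpose_add, transpose_sub, transpose_one, ht]] at h
      simp only [add_mul, sub_mul, one_mul, Matrix.trace_add, Matrix.trace_sub,
        trace_stdBasisMatrix_mul] at h
      nlinarith [h]
    set d := A i i + A j j with hd
    set e := A j i - A i j with he
    have he0 : e = 0 := by
      rcases eq_or_lt_of_le (by positivity : (0:ℝ) ≤ d ^ 2 + e ^ 2) with h0 | hpos
      · nlinarith [sq_nonneg e, sq_nonneg d]
      · set r := Real.sqrt (d ^ 2 + e ^ 2) with hr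
        have hrpos : 0 < r := Real.sqrt_pos.mpr hpos
        have hr2 : r ^ 2 = d ^ 2 + e ^ 2 := Real.sq_sqrt (by positivity)
        have hcs : (d / r) ^ 2 + (e / r) ^ 2 = 1 := by
          field_simp
          linarith [hr2]
        have h := main (d / r) (e / r) hcs
        have h' : (d * d + e * e) / r - d ≤ 0 := by
          have : (d / r - 1) * d + e / r * e = (d * d + e * e) / r - d := by
            field_simp; ring
          nlinarith [h, this]
        have h2 : d * d + e * e ≤ d * r := by
          have := mul_le_mul_of_nonneg_right h' (le_of_lt hrpos)
          calc d * d + e * e = ((d * d + e * e) / r) * r := by field_simp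
            _ ≤ d * r := by nlinarith [this]
        nlinarith [hr2, hrpos, h2, sq_nonneg (r - d)]
    -- conclude A i j = A j i
    simp only [he] at he0
    linarith [he0]
  -- Hermitian
  have hherm : A.IsHermitian := by
    rw [Matrix.IsHermitian, Matrix.conjTranspose_eq_transpose_of_trivial]
    exact hsymm
  clear_value A
  refine ⟨hsymm, ?_⟩
  apply hherm.posSemidef_iff_eigenvalues_nonneg.mpr
  intro m
  set μ : Fin k → ℝ := hherm.eigenvalues with hμ
  set U : Matrix (Fin k) (Fin k) ℝ := (hherm.eigenvectorUnitary : Matrix (Fin k) (Fin k) ℝ)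
    with hU
  have hUU : star U * U = 1 := Unitary.coe_star_mul_self _
  have hUU' : U * star U = 1 := Unitary.coe_mul_star_self _
  have hstar : star U = Uᵀ := by
    rw [Matrix.star_eq_conjTranspose, Matrix.conjTranspose_eq_transpose_of_trivial]
  have hspec : A = U * diagonal (fun l => μ l) * Uᵀ := by
    rw [← hstar, hμ, hU]
    have := hherm.spectral_theorem
    rw [Unitary.conjStarAlgAut_apply] at this
    convert this using 2 <;> rfl
  have hUtU : Uᵀ * U = 1 := by rw [← hstar]; exact hUU
  have hUUt : U * Uᵀ = 1 := by rw [← hstar]; exact hUU'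
  clear_value U μ
  set d : Fin k → ℝ := fun l => if l = m then (-1:ℝ) else 1 with hd
  have hDsq : diagonal d * diagonal d = (1 : Matrix (Fin k) (Fin k) ℝ) := by
    have h1 : (fun l => d l * d l) = fun _ => (1:ℝ) := by
      funext l; by_cases hl : l = m <;> simp [hd, hl]
    rw [diagonal_mul_diagonal, h1, Matrix.diagonal_one]
  have hQsymm : (U * diagonal d * Uᵀ)ᵀ = U * diagonal d * Uᵀ := by
    simp [Matrix.transpose_mul, Matrix.mul_assoc]
  have hQorth : (U * diagonal d * Uᵀ)ᵀ * (U * diagonal d * Uᵀ) = 1 := by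
    rw [hQsymm]
    calc U * diagonal d * Uᵀ * (U * diagonal d * Uᵀ)
        = U * diagonal d * (Uᵀ * U) * diagonal d * Uᵀ := by
          simp only [Matrix.mul_assoc]
      _ = U * (diagonal d * diagonal d) * Uᵀ := by
          rw [hUtU]; simp only [Matrix.mul_assoc, Matrix.mul_one]
      _ = U * Uᵀ := by rw [hDsq, Matrix.mul_one]
      _ = 1 := hUUt
  have h := key _ hQorth
  have htrQA : ((U * diagonal d * Uᵀ)ᵀ * A).trace = ∑ l, d l * μ l := by
    rw [hQsymm]
    conv_lhs => rw [hspec]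
    have e : U * diagonal d * Uᵀ * (U * diagonal (fun l => μ l) * Uᵀ)
        = U * (diagonal d * diagonal (fun l => μ l)) * Uᵀ := by
      calc U * diagonal d * Uᵀ * (U * diagonal (fun l => μ l) * Uᵀ)
          = U * diagonal d * (Uᵀ * U) * diagonal (fun l => μ l) * Uᵀ := by
            simp only [Matrix.mul_assoc]
        _ = _ := by rw [hUtU]; simp only [Matrix.mul_assoc, Matrix.mul_one]
    rw [e, Matrix.trace_mul_cycle, ← Matrix.mul_assoc, hUtU, Matrix.one_mul,
      diagonal_mul_diagonal, Matrix.trace_diagonal]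
  have htrA : A.trace = ∑ l, μ l := by
    conv_lhs => rw [hspec]
    rw [Matrix.trace_mul_cycle, hUtU, Matrix.one_mul, Matrix.trace_diagonal]
  rw [htrQA, htrA] at h
  have hsplit : ∑ l, d l * μ l = (∑ l, μ l) - 2 * μ m := by
    have step : ∀ l ∈ Finset.univ, d l * μ l
        = μ l - (if l = m then 2 * μ m else 0) := by
      intro l _
      by_cases hl : l = m
      · subst hl; simp [hd]; ring
      · simp [hd, hl]
    rw [Finset.sum_congr rfl step, Finset.sum_sub_distrib]
    simp
  rw [hsplit] at h
  exact (by linarith : (0:ℝ) ≤ μ m)
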